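/- Let 𝒳 = {x₁, …, x_M} ⊆ ℝ and 𝒮 ⊆ ℝ be finite with at least one element. Suppose min over distinct s, s' ∈ 𝒮 of |s − s'| ≥ 2 · max over x, x' ∈ 𝒳 of |x − x'|. Then for all x_p, x_q ∈ 𝒳, the constant functions u_p(s) = x_p and u_q(s) = x_q satisfy d_SI(u_p, u_q) = |x_p − x_q|. -/

import Mathlib

open Finset

/-- The distance `d_SI` between two input symbols of the associated channel. -/
noncomputable def dSI (S : Finset ℝ) (hS : S.Nonempty) (t r : ℝ → ℝ) : ℝ :=
  (S ×ˢ S).inf' (hS.product hS) fun p => |t p.1 + p.1 - (r p.2 + p.2)|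

/-- If the minimum gap between distinct interference symbols is at least twice the
maximum spread of the input alphabet `X`, then for all `x_p, x_q ∈ X` the constant
functions `u_p ≡ x_p` and `u_q ≡ x_q` satisfy `d_SI(u_p, u_q) = |x_p - x_q|`. -/
theorem stmt8 (X S : Finset ℝ) (hX : X.Nonempty) (hS : S.Nonempty)
    (hgap : ∀ s ∈ S, ∀ s' ∈ S, s ≠ s' → ∀ x ∈ X, ∀ x' ∈ X, |s - s'| ≥ 2 * |x - x'|) :
    ∀ xp ∈ X, ∀ xq ∈ X,
      dSI S hS (fun _ => xp) (fun _ => xq) = |xp - xq| := by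
  intro xp hxp xq hxq
  obtain ⟨s0, hs0⟩ := hS
  apply le_antisymm
  · have := Finset.inf'_le (f := fun p : ℝ × ℝ => |xp + p.1 - (xq + p.2)|)
      (b := (s0, s0)) (Finset.mk_mem_product hs0 hs0)
    simpa [dSI, -Finset.inf'_le_iff] using this
  · apply Finset.le_inf'
    rintro ⟨s1, s2⟩ hp
    rw [Finset.mem_product] at hp
    by_cases h : s1 = s2
    · subst h
      simp only []
      have : xp + s1 - (xq + s1) = xp - xq := by ring
      rw [this]
    · have hg := hgap s1 hp.1 s2 hp.2 h xp hxp xq hxq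
      have h1 : |s1 - s2| - |xp - xq| ≤ |xp + s1 - (xq + s2)| := by
        have : |s1 - s2| ≤ |xp + s1 - (xq + s2)| + |xp - xq| := by
          have := abs_sub_abs_le_abs_sub (xp + s1 - (xq + s2)) (xp - xq)
          have heq : (xp + s1 - (xq + s2)) - (xp - xq) = s1 - s2 := by ring
          rw [heq] at this
          have h2 := abs_sub (xp + s1 - (xq + s2)) (xp - xq)
          calc |s1 - s2| = |(xp + s1 - (xq + s2)) - (xp - xq)| := by rw [heq]
            _ ≤ |xp + s1 - (xq + s2)| + |xp - xq| := abs_sub _ _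
        linarith
      have : |xp - xq| ≤ |s1 - s2| - |xp - xq| := by linarith
      linarith
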